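/- With the construction data as in the context, for every N ≥ 1 the subspace B_N is a rational subspace of ℝ^{2ℓ} of dimension ℓ and its height satisfies H(B_N) ≤ (2(2ℓ+1)√(2ℓ))^ℓ · (θ^⌊α^N⌋)^ℓ. -/

import Mathlib

open scoped BigOperators ENNReal

noncomputable section

/-- A vector of `ℝⁿ` has rational coordinates. -/
def IsRatVec {n : ℕ} (v : EuclideanSpace ℝ (Fin n)) : Prop := ∀ i, ∃ q : ℚ, v i = (q : ℝ)

/-- A vector of `ℝⁿ` has integer coordinates. -/
def IsIntVec {n : ℕ} (v : EuclideanSpace ℝ (Fin n)) : Prop := ∀ i, ∃ z : ℤ, v i = (z : ℝ)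

/-- A subspace of `ℝⁿ` is rational if it is spanned by vectors with rational coordinates. -/
def IsRationalSubspace {n : ℕ} (B : Submodule ℝ (EuclideanSpace ℝ (Fin n))) : Prop :=
  ∃ S : Set (EuclideanSpace ℝ (Fin n)), (∀ v ∈ S, IsRatVec v) ∧ Submodule.span ℝ S = B

/-- `v` is a `ℤ`-basis of the lattice `B ∩ ℤⁿ`. -/
def IsZBasisOf {n e : ℕ} (B : Submodule ℝ (EuclideanSpace ℝ (Fin n)))
    (v : Fin e → EuclideanSpace ℝ (Fin n)) : Prop :=
  (∀ i, v i ∈ B ∧ IsIntVec (v i)) ∧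
    ∀ x : EuclideanSpace ℝ (Fin n), x ∈ B → IsIntVec x →
      ∃! c : Fin e → ℤ, x = ∑ i, (c i : ℝ) • v i

/-- Generalised determinant `√(det(ᵀM·M))` of a family of vectors, i.e. the norm
`‖v₁ ∧ ⋯ ∧ v_e‖` of their exterior product (square root of the Gram determinant). -/
def gramDet {n e : ℕ} (v : Fin e → EuclideanSpace ℝ (Fin n)) : ℝ :=
  Real.sqrt (Matrix.det (Matrix.of fun i j => (inner ℝ (v i) (v j) : ℝ)))

/-- Height of a rational subspace: `√(det(ᵀM·M))` for `M` a matrix whose columns form a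
`ℤ`-basis of `B ∩ ℤⁿ` (this value is independent of the chosen basis). -/
def height {n : ℕ} (B : Submodule ℝ (EuclideanSpace ℝ (Fin n))) : ℝ :=
  sSup {h : ℝ | ∃ (e : ℕ) (v : Fin e → EuclideanSpace ℝ (Fin n)), IsZBasisOf B v ∧ h = gramDet v}

/-- `ψ(X,Y)`, the sine of the angle between `X` and `Y`. -/
def psiVec {n : ℕ} (X Y : EuclideanSpace ℝ (Fin n)) : ℝ :=
  Real.sqrt (‖X‖ ^ 2 * ‖Y‖ ^ 2 - (inner ℝ X Y : ℝ) ^ 2) / (‖X‖ * ‖Y‖)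

/-- `ψⱼ(A,B)`, the `j`-th canonical angle between the subspaces `A` and `B`. -/
def psiSub {n : ℕ} (j : ℕ) (A B : Submodule ℝ (EuclideanSpace ℝ (Fin n))) : ℝ :=
  sInf {l : ℝ | 0 ≤ l ∧ ∃ Aj : Submodule ℝ (EuclideanSpace ℝ (Fin n)), Aj ≤ A ∧
    Module.finrank ℝ Aj = j ∧ ∀ X ∈ Aj, X ≠ 0 → ∃ Y ∈ B, Y ≠ 0 ∧ psiVec X Y ≤ l}

/-- `A` is `(e,j)`-irrational: `dim (A ∩ B) < j` for every rational subspace `B` of dim `e`. -/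
def IsIrrational {n : ℕ} (e j : ℕ) (A : Submodule ℝ (EuclideanSpace ℝ (Fin n))) : Prop :=
  ∀ B : Submodule ℝ (EuclideanSpace ℝ (Fin n)), IsRationalSubspace B →
    Module.finrank ℝ B = e → Module.finrank ℝ ↥(A ⊓ B) < j

/-- The exponent of approximation `μₙ(A|e)ⱼ ∈ [0,∞]`. -/
def mu {n : ℕ} (e j : ℕ) (A : Submodule ℝ (EuclideanSpace ℝ (Fin n))) : ℝ≥0∞ :=
  sSup {x : ℝ≥0∞ | ∃ β : ℝ, 0 < β ∧ x = ENNReal.ofReal β ∧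
    {B : Submodule ℝ (EuclideanSpace ℝ (Fin n)) | IsRationalSubspace B ∧
      Module.finrank ℝ B = e ∧ psiSub j A B ≤ height B ^ (-β)}.Infinite}

/-- `μ̂ₙ(d|e)ⱼ = inf {μₙ(A|e)ⱼ : A ∈ 𝔍ₙ(d,e)ⱼ}`. -/
def muHat (n d e j : ℕ) : ℝ≥0∞ :=
  sInf (mu e j '' {A : Submodule ℝ (EuclideanSpace ℝ (Fin n)) |
    Module.finrank ℝ A = d ∧ IsIrrational e j A})




/-- Gram matrix transformation under linear combinations. -/
lemma gram_comb {n e e' : ℕ} (v : Fin e → EuclideanSpace ℝ (Fin n))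
    (C : Matrix (Fin e') (Fin e) ℝ) (X : Fin e' → EuclideanSpace ℝ (Fin n))
    (hX : ∀ j, X j = ∑ i, C j i • v i) :
    (Matrix.of fun i j => (inner ℝ (X i) (X j) : ℝ)) =
      C * (Matrix.of fun i j => (inner ℝ (v i) (v j) : ℝ)) * C.transpose := by
  ext j j'
  simp only [Matrix.mul_apply, Matrix.of_apply, Matrix.transpose_apply, hX,
    sum_inner, inner_sum, real_inner_smul_left, real_inner_smul_right]
  simp only [Finset.mul_sum, Finset.sum_mul]
  exact Finset.sum_congr rfl fun i _ => Finset.sum_congr rfl fun k _ => by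
    rw [real_inner_comm]; ring

/-- Gram determinant of a linearly dependent family is zero. -/
lemma gram_det_zero {n e : ℕ} (v : Fin e → EuclideanSpace ℝ (Fin n))
    (h : ¬ LinearIndependent ℝ v) :
    (Matrix.of fun i j => (inner ℝ (v i) (v j) : ℝ)).det = 0 := by
  obtain ⟨g, hg, i, hi⟩ := Fintype.not_linearIndependent_iff.mp h
  apply Matrix.exists_mulVec_eq_zero_iff.mp
  refine ⟨g, fun h0 => hi (by rw [h0]; rfl), ?_⟩
  ext k
  simp only [Matrix.mulVec, dotProduct, Matrix.of_apply, Pi.zero_apply]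
  calc ∑ j, (inner ℝ (v k) (v j) : ℝ) * g j
      = (inner ℝ (v k) (∑ j, g j • v j) : ℝ) := by
        rw [inner_sum]; exact Finset.sum_congr rfl fun j _ => by
          rw [real_inner_smul_right]; ring
    _ = 0 := by rw [hg, inner_zero_right]

lemma geom_bound (θ : ℕ) (hθ : 2 ≤ θ) : ∀ m : ℕ, (∑ j ∈ Finset.range m, θ ^ j) * θ ≤ 2 * θ ^ m := by
  intro m
  induction m with
  | zero => simp
  | succ m ih =>
    rw [Finset.sum_range_succ, add_mul, pow_succ]
    have h2 : 2 * θ ^ m ≤ θ ^ m * θ :=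
      (Nat.mul_comm 2 (θ^m)) ▸ Nat.mul_le_mul_left _ hθ
    omega

lemma floor_pow_strictMono (α : ℝ) (hα : 2 < α) :
    StrictMono (fun k => Nat.floor (α ^ k)) := by
  have hα1 : (1 : ℝ) ≤ α := by linarith
  apply strictMono_nat_of_lt_succ
  intro k
  have h1 : (1 : ℝ) ≤ α ^ k := one_le_pow₀ hα1
  have h2 : α ^ k + 1 ≤ α ^ (k + 1) := by
    rw [pow_succ]; nlinarith
  have h3 : Nat.floor (α ^ k + 1) ≤ Nat.floor (α ^ (k + 1)) :=
    Nat.floor_le_floor h2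
  rw [Nat.floor_add_one (by linarith : (0:ℝ) ≤ α ^ k)] at h3
  omega

lemma one_le_floor_pow (α : ℝ) (hα : 2 < α) (k : ℕ) : 1 ≤ Nat.floor (α ^ k) := by
  have h1 : (1 : ℝ) ≤ α ^ k := one_le_pow₀ (by linarith)
  exact Nat.le_floor (by exact_mod_cast h1)

lemma sum_pow_floor_le (θ : ℕ) (hθ2 : 2 ≤ θ) (α : ℝ) (hα : 2 < α) (N : ℕ) :
    (∑ k ∈ Finset.range (N+1), θ ^ (Nat.floor (α^N) - Nat.floor (α^k))) * θ
      ≤ 2 * θ ^ (Nat.floor (α^N)) := by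
  set m := Nat.floor (α ^ N) with hm
  have hmono := floor_pow_strictMono α hα
  have hφlt : ∀ k ∈ Finset.range (N+1), m - Nat.floor (α^k) < m := by
    intro k hk
    have h1 := one_le_floor_pow α hα k
    have h2 : Nat.floor (α^k) ≤ m := hmono.monotone (by
      simpa using Nat.lt_succ_iff.mp (Finset.mem_range.mp hk))
    have hm1 := one_le_floor_pow α hα N
    omega
  have hinj : ∀ k ∈ Finset.range (N+1), ∀ k' ∈ Finset.range (N+1),
      m - Nat.floor (α^k) = m - Nat.floor (α^k') → k = k' := by
    intro k hk k' hk' h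
    by_contra hne
    have h1 : Nat.floor (α^k) ≠ Nat.floor (α^k') := fun he => hne (hmono.injective he)
    have h2 : Nat.floor (α^k) ≤ m := hmono.monotone (by
      simpa using Nat.lt_succ_iff.mp (Finset.mem_range.mp hk))
    have h3 : Nat.floor (α^k') ≤ m := hmono.monotone (by
      simpa using Nat.lt_succ_iff.mp (Finset.mem_range.mp hk'))
    omega
  calc (∑ k ∈ Finset.range (N+1), θ ^ (m - Nat.floor (α^k))) * θ
      = (∑ j ∈ (Finset.range (N+1)).image (fun k => m - Nat.floor (α^k)), θ ^ j) * θ := by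
        rw [Finset.sum_image hinj]
    _ ≤ (∑ j ∈ Finset.range m, θ ^ j) * θ := by
        apply Nat.mul_le_mul_right
        apply Finset.sum_le_sum_of_subset
        intro j hj
        obtain ⟨k, hk, rfl⟩ := Finset.mem_image.mp hj
        exact Finset.mem_range.mpr (hφlt k hk)
    _ ≤ 2 * θ ^ m := geom_bound θ hθ2 m


lemma euclid_sum_apply {n e : ℕ} (v : Fin e → EuclideanSpace ℝ (Fin n)) (g : Fin e → ℝ) (i : Fin n) :
    (∑ j, g j • v j) i = ∑ j, g j * v j i := by
  induction (Finset.univ : Finset (Fin e)) using Finset.induction with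
  | empty => simp
  | insert _ _ h ih => rw [Finset.sum_insert h, Finset.sum_insert h, ← ih]; rfl

lemma euclid_inner_eq {n : ℕ} (x y : EuclideanSpace ℝ (Fin n)) :
    (inner ℝ x y : ℝ) = ∑ i, x i * y i := by
  rw [PiLp.inner_apply]; simp [RCLike.inner_apply, mul_comm]

set_option maxHeartbeats 1000000 in
/-- **Claim 4.2.** Each `B_N` is a rational subspace of `ℝ^{2ℓ}` of dimension `ℓ` with
height at most `(2(2ℓ+1)√(2ℓ))^ℓ · (θ^⌊α^N⌋)^ℓ`. -/
theorem statement15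
    (ℓ : ℕ) (hℓ : 1 ≤ ℓ) (α : ℝ) (hα : 2 < α) (θ : ℕ) (hθp : θ.Prime)
    (hθ : (Nat.factorial ℓ : ℝ) * (2 * (ℓ : ℝ) + 1) ^ ℓ < (θ : ℝ))
    (E : Fin ℓ → Fin ℓ → ℕ → ℕ)
    (hE : ∀ i j k, (i ≠ j → E i j k = 1 ∨ E i j k = 2) ∧
      (i = j → E i j k = 2 * ℓ ∨ E i j k = 2 * ℓ + 1))
    (f : ℕ → Fin ℓ → Fin ℓ → ℕ)
    (hf : ∀ N i j, f N i j =
      ∑ k ∈ Finset.range (N + 1), E i j k * θ ^ (Nat.floor (α ^ N) - Nat.floor (α ^ k)))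
    (X : ℕ → Fin ℓ → EuclideanSpace ℝ (Fin (2 * ℓ)))
    (hX : ∀ N j i, X N j i = if h : (i : ℕ) < ℓ then
        (if (⟨i, h⟩ : Fin ℓ) = j then ((θ : ℝ) ^ Nat.floor (α ^ N)) else 0)
      else (f N ⟨(i : ℕ) - ℓ, by have := i.isLt; omega⟩ j : ℝ))
    (B : ℕ → Submodule ℝ (EuclideanSpace ℝ (Fin (2 * ℓ))))
    (hB : ∀ N, B N = Submodule.span ℝ (Set.range (X N)))
    : ∀ N ≥ 1, IsRationalSubspace (B N) ∧ Module.finrank ℝ (B N) = ℓ ∧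
      height (B N) ≤ (2 * (2 * (ℓ : ℝ) + 1) * Real.sqrt (2 * (ℓ : ℝ))) ^ ℓ *
        ((θ : ℝ) ^ Nat.floor (α ^ N)) ^ ℓ := by
  intro N hN
  have hθ2 : 2 ≤ θ := hθp.two_le
  set m := Nat.floor (α ^ N) with hmdef
  have hm1 : 1 ≤ m := one_le_floor_pow α hα N
  have hθR : (0:ℝ) < θ := by exact_mod_cast Nat.lt_of_lt_of_le Nat.zero_lt_two hθ2
  -- θ ≥ 2ℓ+1
  have hθℓ : (2*(ℓ:ℝ)+1) ≤ θ := by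
    have h1 : (1:ℝ) ≤ Nat.factorial ℓ := by exact_mod_cast Nat.one_le_iff_ne_zero.mpr ℓ.factorial_ne_zero
    have h2 : (2*(ℓ:ℝ)+1) ≤ (2*(ℓ:ℝ)+1)^ℓ := le_self_pow₀ (by linarith) (by omega)
    nlinarith
  -- coordinate descriptions
  have hXtop : ∀ (j : Fin ℓ) (i : Fin (2*ℓ)) (h : (i:ℕ) < ℓ),
      X N j i = if (⟨(i:ℕ), h⟩ : Fin ℓ) = j then ((θ:ℝ)^m) else 0 := by
    intro j i h; rw [hX, dif_pos h]
  have hXbot : ∀ (j : Fin ℓ) (i : Fin (2*ℓ)) (h : ¬ (i:ℕ) < ℓ),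
      X N j i = (f N ⟨(i:ℕ) - ℓ, by have := i.isLt; omega⟩ j : ℝ) := by
    intro j i h; rw [hX, dif_neg h]
  -- integrality of coordinates
  have hXint : ∀ j, IsIntVec (X N j) := by
    intro j i
    by_cases h : (i:ℕ) < ℓ
    · rw [hXtop j i h]
      by_cases he : (⟨(i:ℕ), h⟩ : Fin ℓ) = j
      · exact ⟨(θ:ℤ)^m, by rw [if_pos he]; push_cast; ring⟩
      · exact ⟨0, by rw [if_neg he]; simp⟩
    · exact ⟨(f N ⟨(i:ℕ) - ℓ, by have := i.isLt; omega⟩ j : ℤ),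
        by rw [hXbot j i h]; push_cast; ring⟩
  have hXmem : ∀ j, X N j ∈ B N := fun j => (hB N) ▸ Submodule.subset_span ⟨j, rfl⟩
  have hθpow : ((θ:ℝ)^m) ≠ 0 := by positivity
  -- linear independence
  have hXli : LinearIndependent ℝ (X N) := by
    rw [Fintype.linearIndependent_iff]
    intro g hg j
    have hjlt : ((j:ℕ)) < 2*ℓ := by omega
    set i₀ : Fin (2*ℓ) := ⟨(j:ℕ), hjlt⟩ with hi₀
    have hlt : ((i₀:ℕ)) < ℓ := j.isLt
    have h0 : (∑ j', g j' • X N j') i₀ = (0 : EuclideanSpace ℝ (Fin (2*ℓ))) i₀ := by rw [hg]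
    rw [euclid_sum_apply] at h0
    have hz : (0 : EuclideanSpace ℝ (Fin (2*ℓ))) i₀ = 0 := rfl
    rw [hz] at h0
    have hcond : (⟨(i₀:ℕ), hlt⟩ : Fin ℓ) = j := by apply Fin.ext; rfl
    have hsum : ∑ j', g j' * X N j' i₀ = g j * ((θ:ℝ)^m) := by
      have : ∀ j', g j' * X N j' i₀ = if j = j' then g j' * ((θ:ℝ)^m) else 0 := by
        intro j'
        rw [hXtop j' i₀ hlt, hcond]
        split_ifs <;> simp
      rw [Finset.sum_congr rfl (fun j' _ => this j'), Finset.sum_ite_eq]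
      simp
    rw [hsum] at h0
    exact (mul_eq_zero.mp h0).resolve_right hθpow
  have hrank : Module.finrank ℝ (B N) = ℓ := by
    rw [hB N, finrank_span_eq_card hXli, Fintype.card_fin]
  have hRHS0 : (0:ℝ) ≤ (2 * (2 * (ℓ : ℝ) + 1) * Real.sqrt (2 * (ℓ : ℝ))) ^ ℓ *
        ((θ : ℝ) ^ m) ^ ℓ := by positivity
  -- bound on f
  have hfle : ∀ i j, (f N i j : ℝ) ≤ 2 * (θ:ℝ)^m := by
    intro i j
    have hE' : ∀ k, E i j k ≤ 2*ℓ+1 := by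
      intro k
      rcases eq_or_ne i j with he | he
      · rcases (hE i j k).2 he with h|h <;> omega
      · rcases (hE i j k).1 he with h|h <;> omega
    have h1 : f N i j ≤ (2*ℓ+1) * ∑ k ∈ Finset.range (N+1), θ ^ (m - Nat.floor (α^k)) := by
      rw [hf, Finset.mul_sum]
      exact Finset.sum_le_sum fun k _ => Nat.mul_le_mul_right _ (hE' k)
    have h2 := sum_pow_floor_le θ hθ2 α hα N
    have h3 : f N i j * θ ≤ (2*ℓ+1) * (2 * θ ^ m) := by
      calc f N i j * θ
          ≤ ((2*ℓ+1) * ∑ k ∈ Finset.range (N+1), θ ^ (m - Nat.floor (α^k))) * θ :=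
            Nat.mul_le_mul_right _ h1
        _ = (2*ℓ+1) * ((∑ k ∈ Finset.range (N+1), θ ^ (m - Nat.floor (α^k))) * θ) := by ring
        _ ≤ (2*ℓ+1) * (2 * θ ^ m) := Nat.mul_le_mul_left _ h2
    have h4 : ((f N i j : ℝ)) * θ ≤ (2*(ℓ:ℝ)+1) * (2 * (θ:ℝ)^m) := by exact_mod_cast h3
    have h5 : (2*(ℓ:ℝ)+1) * (2 * (θ:ℝ)^m) ≤ (2 * (θ:ℝ)^m) * θ := by
      nlinarith [pow_pos hθR m]
    exact le_of_mul_le_mul_right (le_trans h4 h5) hθR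
  -- nonnegativity of coordinates
  have hXnn : ∀ j i, 0 ≤ X N j i := by
    intro j i
    by_cases h : (i:ℕ) < ℓ
    · rw [hXtop j i h]; split_ifs <;> positivity
    · rw [hXbot j i h]; positivity
  -- Gram entry bound
  have hGentry : ∀ j j', |(inner ℝ (X N j) (X N j') : ℝ)| ≤ (1 + 8*(ℓ:ℝ)) * ((θ:ℝ)^m)^2 := by
    intro j j'
    have hjlt : ((j:ℕ)) < 2*ℓ := by omega
    set i₀ : Fin (2*ℓ) := ⟨(j:ℕ), hjlt⟩ with hi₀
    have hnn : (0:ℝ) ≤ inner ℝ (X N j) (X N j') := by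
      rw [euclid_inner_eq]
      exact Finset.sum_nonneg fun i _ => mul_nonneg (hXnn j i) (hXnn j' i)
    rw [abs_of_nonneg hnn, euclid_inner_eq]
    have hθm0 : (0:ℝ) < (θ:ℝ)^m := pow_pos hθR m
    have hbd : ∀ i : Fin (2*ℓ), X N j i * X N j' i ≤
        (if i = i₀ then ((θ:ℝ)^m)^2 else 0) + 4 * ((θ:ℝ)^m)^2 := by
      intro i
      have h4 : (0:ℝ) ≤ 4 * ((θ:ℝ)^m)^2 := by positivity
      by_cases h : (i:ℕ) < ℓ
      · rw [hXtop j i h, hXtop j' i h]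
        by_cases he : (⟨(i:ℕ), h⟩ : Fin ℓ) = j
        · have hii : i = i₀ := by
            apply Fin.ext
            have : ((⟨(i:ℕ), h⟩ : Fin ℓ) : ℕ) = (j : ℕ) := by rw [he]
            simpa using this
          rw [if_pos he, if_pos hii]
          have hle : (if (⟨(i:ℕ), h⟩ : Fin ℓ) = j' then ((θ:ℝ)^m) else 0) ≤ (θ:ℝ)^m := by
            split_ifs
            · exact le_refl _
            · positivity
          have hge : (0:ℝ) ≤ (if (⟨(i:ℕ), h⟩ : Fin ℓ) = j' then ((θ:ℝ)^m) else 0) := by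
            split_ifs <;> positivity
          nlinarith
        · rw [if_neg he, zero_mul]
          split_ifs <;> nlinarith
      · rw [hXbot j i h, hXbot j' i h]
        have f1 := hfle ⟨(i:ℕ) - ℓ, by have := i.isLt; omega⟩ j
        have f2 := hfle ⟨(i:ℕ) - ℓ, by have := i.isLt; omega⟩ j'
        have fn1 : (0:ℝ) ≤ ((f N ⟨(i:ℕ) - ℓ, by have := i.isLt; omega⟩ j : ℕ) : ℝ) :=
          Nat.cast_nonneg _
        have fn2 : (0:ℝ) ≤ ((f N ⟨(i:ℕ) - ℓ, by have := i.isLt; omega⟩ j' : ℕ) : ℝ) :=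
          Nat.cast_nonneg _
        split_ifs <;> nlinarith
    calc ∑ i, X N j i * X N j' i
        ≤ ∑ i : Fin (2*ℓ), ((if i = i₀ then ((θ:ℝ)^m)^2 else 0) + 4 * ((θ:ℝ)^m)^2) :=
          Finset.sum_le_sum fun i _ => hbd i
      _ = ((θ:ℝ)^m)^2 + (2*ℓ : ℕ) * (4 * ((θ:ℝ)^m)^2) := by
          rw [Finset.sum_add_distrib, Finset.sum_ite_eq' Finset.univ i₀,
            if_pos (Finset.mem_univ _), Finset.sum_const, Finset.card_univ,
            Fintype.card_fin, nsmul_eq_mul]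
      _ ≤ (1 + 8*(ℓ:ℝ)) * ((θ:ℝ)^m)^2 := by push_cast; nlinarith
  -- bound on gramDet (X N)
  have hgX : gramDet (X N) ≤ (2 * (2 * (ℓ : ℝ) + 1) * Real.sqrt (2 * (ℓ : ℝ))) ^ ℓ *
        ((θ : ℝ) ^ m) ^ ℓ := by
    have hdetle : |(Matrix.of fun j j' => (inner ℝ (X N j) (X N j') : ℝ)).det| ≤
        (Fintype.card (Fin ℓ)).factorial •
          ((1 + 8*(ℓ:ℝ)) * ((θ:ℝ)^m)^2) ^ (Fintype.card (Fin ℓ)) := by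
      apply Matrix.det_le (abv := AbsoluteValue.abs (S := ℝ))
      intro i j
      exact hGentry i j
    rw [Fintype.card_fin, nsmul_eq_mul] at hdetle
    have hnat : (Nat.factorial ℓ) * (1+8*ℓ)^ℓ ≤ ((2*ℓ)) ^ ℓ * ((2*(2*ℓ+1))^2)^ℓ := by
      have h1 : Nat.factorial ℓ ≤ (2*ℓ)^ℓ :=
        le_trans (Nat.factorial_le_pow ℓ) (Nat.pow_le_pow_left (by omega) ℓ)
      have h2 : (1+8*ℓ)^ℓ ≤ ((2*(2*ℓ+1))^2)^ℓ := Nat.pow_le_pow_left (by nlinarith) ℓ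
      exact Nat.mul_le_mul h1 h2
    have hkey : (Nat.factorial ℓ : ℝ) * (1+8*(ℓ:ℝ))^ℓ ≤
        (2*(ℓ:ℝ))^ℓ * ((2*(2*(ℓ:ℝ)+1))^2)^ℓ := by exact_mod_cast hnat
    have hsq : (Real.sqrt (2*(ℓ:ℝ)))^2 = 2*(ℓ:ℝ) := Real.sq_sqrt (by positivity)
    have hdet1 : (Matrix.of fun j j' => (inner ℝ (X N j) (X N j') : ℝ)).det ≤
        ((2 * (2 * (ℓ:ℝ) + 1) * Real.sqrt (2 * (ℓ:ℝ))) ^ ℓ * ((θ:ℝ)^m)^ℓ)^2 := by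
      have habs := (abs_le.mp hdetle).2
      calc (Matrix.of fun j j' => (inner ℝ (X N j) (X N j') : ℝ)).det
          ≤ (Nat.factorial ℓ : ℝ) * ((1 + 8*(ℓ:ℝ)) * ((θ:ℝ)^m)^2) ^ ℓ := habs
        _ = (Nat.factorial ℓ : ℝ) * (1+8*(ℓ:ℝ))^ℓ * (((θ:ℝ)^m)^2)^ℓ := by
            rw [mul_pow]; ring
        _ ≤ (2*(ℓ:ℝ))^ℓ * ((2*(2*(ℓ:ℝ)+1))^2)^ℓ * (((θ:ℝ)^m)^2)^ℓ :=
            mul_le_mul_of_nonneg_right hkey (by positivity)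
        _ = ((2 * (2 * (ℓ:ℝ) + 1) * Real.sqrt (2 * (ℓ:ℝ))) ^ ℓ * ((θ:ℝ)^m)^ℓ)^2 := by
            have e1 : ((2 * (2 * (ℓ:ℝ) + 1) * Real.sqrt (2 * (ℓ:ℝ))) ^ ℓ * ((θ:ℝ)^m)^ℓ)^2
                = ((2 * (2 * (ℓ:ℝ) + 1) * Real.sqrt (2 * (ℓ:ℝ)))^2)^ℓ * (((θ:ℝ)^m)^2)^ℓ := by
              rw [mul_pow, ← pow_mul, ← pow_mul, mul_comm ℓ 2, pow_mul, pow_mul]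
            have e2 : (2 * (2 * (ℓ:ℝ) + 1) * Real.sqrt (2 * (ℓ:ℝ)))^2
                = (2*(ℓ:ℝ)) * (2*(2*(ℓ:ℝ)+1))^2 := by rw [mul_pow, hsq]; ring
            rw [e1, e2, mul_pow (2*(ℓ:ℝ)) ((2*(2*(ℓ:ℝ)+1))^2) ℓ]
    unfold gramDet
    calc Real.sqrt (Matrix.of fun j j' => (inner ℝ (X N j) (X N j') : ℝ)).det
        ≤ Real.sqrt (((2 * (2 * (ℓ:ℝ) + 1) * Real.sqrt (2 * (ℓ:ℝ))) ^ ℓ * ((θ:ℝ)^m)^ℓ)^2) :=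
          Real.sqrt_le_sqrt hdet1
      _ = (2 * (2 * (ℓ:ℝ) + 1) * Real.sqrt (2 * (ℓ:ℝ))) ^ ℓ * ((θ:ℝ)^m)^ℓ :=
          Real.sqrt_sq hRHS0
  refine ⟨⟨Set.range (X N), ?_, (hB N).symm⟩, hrank, ?_⟩
  · rintro v ⟨j, rfl⟩ i
    obtain ⟨z, hz⟩ := hXint j i
    exact ⟨(z:ℚ), by rw [hz]; norm_cast⟩
  -- the height bound
  apply Real.sSup_le _ hRHS0
  rintro h ⟨e, v, ⟨hv1, hv2⟩, rfl⟩
  by_cases hli : LinearIndependent ℝ v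
  · -- independent case: e = ℓ and the basis has smaller Gram determinant than X N
    have hspanv : Submodule.span ℝ (Set.range v) ≤ B N :=
      Submodule.span_le.mpr (by rintro x ⟨i, rfl⟩; exact (hv1 i).1)
    have he1 : e ≤ ℓ := by
      have h1 : Module.finrank ℝ (Submodule.span ℝ (Set.range v)) = e := by
        rw [finrank_span_eq_card hli, Fintype.card_fin]
      have h2 := Submodule.finrank_mono hspanv
      rw [h1, hrank] at h2
      exact h2
    choose c hc using fun j => hv2 (X N j) (hXmem j) (hXint j)
    have hcc : ∀ j, X N j = ∑ i, ((c j i : ℝ)) • v i := fun j => (hc j).1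
    have he2 : ℓ ≤ e := by
      have hle : B N ≤ Submodule.span ℝ (Set.range v) := by
        rw [hB]
        refine Submodule.span_le.mpr ?_
        rintro x ⟨j, rfl⟩
        rw [hcc j]
        exact Submodule.sum_mem _ fun i _ =>
          Submodule.smul_mem _ _ (Submodule.subset_span ⟨i, rfl⟩)
      have h3 := Submodule.finrank_mono hle
      rw [hrank] at h3
      refine le_trans h3 ?_
      have h4 := finrank_range_le_card (R := ℝ) v
      rw [Fintype.card_fin] at h4
      exact h4
    have he : ℓ = e := le_antisymm he2 he1
    subst he
    set Cz : Matrix (Fin ℓ) (Fin ℓ) ℤ := Matrix.of c with hCz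
    set Cr : Matrix (Fin ℓ) (Fin ℓ) ℝ := Cz.map Int.cast with hCr
    have hGXeq : (Matrix.of fun i j => (inner ℝ (X N i) (X N j) : ℝ)) =
        Cr * (Matrix.of fun i j => (inner ℝ (v i) (v j) : ℝ)) * Cr.transpose :=
      gram_comb v Cr (X N) (fun j => hcc j)
    have hdetmul : (Matrix.of fun i j => (inner ℝ (X N i) (X N j) : ℝ)).det =
        Cr.det^2 * (Matrix.of fun i j => (inner ℝ (v i) (v j) : ℝ)).det := by
      rw [hGXeq, Matrix.det_mul, Matrix.det_mul, Matrix.det_transpose]; ring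
    have hdetCz : Cz.det ≠ 0 := by
      intro h0
      obtain ⟨d, hd0, hd⟩ := Matrix.exists_vecMul_eq_zero_iff.mpr h0
      apply hd0
      have hz : ∀ j, (d j : ℝ) = 0 := by
        apply Fintype.linearIndependent_iff.mp hXli (fun j => (d j : ℝ))
        calc ∑ j, (d j:ℝ) • X N j = ∑ j, (d j:ℝ) • ∑ i, ((c j i : ℝ)) • v i :=
              Finset.sum_congr rfl fun j _ => by rw [hcc j]
          _ = ∑ j, ∑ i, (((d j * c j i : ℤ)) : ℝ) • v i := by
              refine Finset.sum_congr rfl fun j _ => ?_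
              rw [Finset.smul_sum]
              refine Finset.sum_congr rfl fun i _ => ?_
              rw [smul_smul]
              norm_cast
          _ = ∑ i, ∑ j, (((d j * c j i : ℤ)) : ℝ) • v i := Finset.sum_comm
          _ = ∑ i, ((((∑ j, d j * c j i : ℤ))) : ℝ) • v i := by
              refine Finset.sum_congr rfl fun i _ => ?_
              rw [← Finset.sum_smul]
              norm_cast
          _ = 0 := by
              refine Finset.sum_eq_zero fun i _ => ?_
              have hdi : ∑ j, d j * c j i = 0 := by
                have := congrFun hd i
                simpa [Matrix.vecMul, dotProduct, hCz] using this
              rw [hdi]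
              simp
      funext j
      exact_mod_cast hz j
    have hdetCr : Cr.det = ((Cz.det : ℤ) : ℝ) := by
      have h5 := RingHom.map_det (Int.castRingHom ℝ) Cz
      rw [hCr]
      rw [show (Cz.map (Int.cast : ℤ → ℝ)).det = (Cz.map (Int.castRingHom ℝ)).det from rfl,
        ]
      exact h5.symm
    have hsq1 : (1:ℝ) ≤ Cr.det^2 := by
      have h1 : (1:ℤ) ≤ |Cz.det| := Int.one_le_abs hdetCz
      have h2 : (1:ℤ) ≤ Cz.det^2 := by nlinarith [sq_abs Cz.det]
      rw [hdetCr]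
      exact_mod_cast h2
    show Real.sqrt ((Matrix.of fun i j => (inner ℝ (v i) (v j) : ℝ)).det) ≤ _
    rcases le_or_gt ((Matrix.of fun i j => (inner ℝ (v i) (v j) : ℝ)).det) 0 with hGv0 | hGv0
    · rw [Real.sqrt_eq_zero_of_nonpos hGv0]
      exact hRHS0
    · have hled : ((Matrix.of fun i j => (inner ℝ (v i) (v j) : ℝ)).det) ≤
          ((Matrix.of fun i j => (inner ℝ (X N i) (X N j) : ℝ)).det) := by
        rw [hdetmul]; nlinarith
      calc Real.sqrt ((Matrix.of fun i j => (inner ℝ (v i) (v j) : ℝ)).det)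
          ≤ Real.sqrt ((Matrix.of fun i j => (inner ℝ (X N i) (X N j) : ℝ)).det) :=
            Real.sqrt_le_sqrt hled
        _ ≤ _ := hgX
  · unfold gramDet
    rw [gram_det_zero v hli, Real.sqrt_zero]
    exact hRHS0

end
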